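/- There exists a universal constant C > 0 with the following property. Let (Ω, P) be a probability space, δ > 0, L ≥ 0, y ∈ ℝ^d, K ≥ 1, and let g : ℝ^d × Ω → ℝ be such that for P-almost every ω the map g(·, ω) is differentiable with L-Lipschitz gradient on ℝ^d, the function ω ↦ ∇_y g(y, ω) is Bochner square-integrable, ∇G(y) = ∫ ∇_y g(y, ω) dP(ω) where G(y') := ∫ g(y', ω) dP(ω), and σ² := ∫ ‖∇_y g(y, ω) − ∇G(y)‖² dP(ω). Then, averaging jointly over ω ∼ P and over (r_1, …, r_K) uniform on ({−1, +1}^d)^K (independent of ω), E ‖(1/K) Σ_{k=1}^K ((g(y + δr_k, ω) − g(y − δr_k, ω))/(2δ)) · r_k − ∇G(y)‖² ≤ C · ( (d/K)‖∇G(y)‖² + L² δ² d³ + (1 + d/K) σ² ). -/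

import Mathlib

open MeasureTheory

/-- The sign vector in `{-1,+1}^d ⊆ ℝ^d` encoded by a Boolean vector. -/
noncomputable def signVec (d : ℕ) (s : Fin d → Bool) : EuclideanSpace ℝ (Fin d) :=
  WithLp.toLp 2 (fun i => if s i then (1 : ℝ) else -1)

open Finset

lemma sum_eval {ι S M : Type*} [Fintype ι] [DecidableEq ι] [Fintype S] [AddCommMonoid M]
    (f : S → M) (k : ι) :
    ∑ t : ι → S, f (t k) = (Fintype.card S) ^ (Fintype.card ι - 1) • ∑ s, f s := by
  rw [← Equiv.sum_comp (Equiv.funSplitAt k S).symm (fun t => f (t k))]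
  have h1 : ∀ x : S × ({ j // j ≠ k } → S),
      f (((Equiv.funSplitAt k S).symm x) k) = f x.1 := by
    intro x; simp [Equiv.funSplitAt, Equiv.piSplitAt]
  simp only [h1]
  rw [Fintype.sum_prod_type_right]
  have h2 : ∀ y : { j // j ≠ k } → S, ∀ x : S, f ((x, y).1) = f x := fun _ _ => rfl
  simp only [h2]
  rw [Finset.sum_const, Finset.card_univ, Fintype.card_fun]
  congr 2
  rw [Fintype.card_subtype_compl]
  simp [Fintype.card_subtype_eq]

lemma sum_eval_pair {ι S M : Type*} [Fintype ι] [DecidableEq ι] [Fintype S] [AddCommMonoid M]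
    (F : S → S → M) (k j : ι) (h : j ≠ k) :
    ∃ c : ℕ, ∑ t : ι → S, F (t k) (t j) = c • ∑ a : S, ∑ b : S, F a b := by
  refine ⟨(Fintype.card S) ^ (Fintype.card { i // i ≠ k } - 1), ?_⟩
  rw [← Equiv.sum_comp (Equiv.funSplitAt k S).symm (fun t => F (t k) (t j))]
  have h1 : ∀ x : S × ({ i // i ≠ k } → S),
      F (((Equiv.funSplitAt k S).symm x) k) (((Equiv.funSplitAt k S).symm x) j)
        = F x.1 (x.2 ⟨j, h⟩) := by
    intro x; simp [Equiv.funSplitAt, Equiv.piSplitAt, h]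
  simp only [h1]
  rw [Fintype.sum_prod_type]
  have h2 : ∀ a : S, ∑ u : { i // i ≠ k } → S, F a (u ⟨j, h⟩)
      = (Fintype.card S) ^ (Fintype.card { i // i ≠ k } - 1) • ∑ b, F a b :=
    fun a => sum_eval (fun b => F a b) (⟨j, h⟩ : { i // i ≠ k })
  simp only [h2]
  rw [Finset.smul_sum]

lemma signVec_mul_self (d : ℕ) (s : Fin d → Bool) (i : Fin d) :
    signVec d s i * signVec d s i = 1 := by
  simp only [signVec, PiLp.toLp_apply]; cases s i <;> norm_num

lemma sum_signVec_mul (d : ℕ) (i j : Fin d) (h : i ≠ j) :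
    ∑ s : Fin d → Bool, signVec d s i * signVec d s j = 0 := by
  have hinv : Function.Involutive (fun s : Fin d → Bool => Function.update s i (!s i)) := by
    intro s
    ext m
    by_cases hm : m = i
    · subst hm; simp
    · simp [Function.update_of_ne hm]
  have e := hinv.toPerm
  have := Equiv.sum_comp hinv.toPerm
    (fun s : Fin d → Bool => signVec d s i * signVec d s j)
  have hneg : ∀ s : Fin d → Bool,
      signVec d (Function.update s i (!s i)) i * signVec d (Function.update s i (!s i)) j
        = -(signVec d s i * signVec d s j) := by
    intro s
    have h1 : signVec d (Function.update s i (!s i)) i = -(signVec d s i) := by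
      simp only [signVec, PiLp.toLp_apply, Function.update_self]
      cases s i <;> norm_num
    have h2 : signVec d (Function.update s i (!s i)) j = signVec d s j := by
      simp only [signVec, PiLp.toLp_apply, Function.update_of_ne (Ne.symm h)]
    rw [h1, h2]; ring
  have h0 : ∑ s : Fin d → Bool, signVec d s i * signVec d s j
      = -∑ s : Fin d → Bool, signVec d s i * signVec d s j := by
    conv_lhs => rw [← this]
    simp only [Function.Involutive.coe_toPerm, hneg, Finset.sum_neg_distrib]
  linarith

open scoped RealInnerProductSpace

lemma inner_signVec (d : ℕ) (q : EuclideanSpace ℝ (Fin d)) (s : Fin d → Bool) :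
    ⟪q, signVec d s⟫ = ∑ i, q i * signVec d s i := by
  rw [PiLp.inner_apply]
  simp [RCLike.inner_apply, mul_comm]

lemma master (d : ℕ) (q z : EuclideanSpace ℝ (Fin d)) :
    ∑ s : Fin d → Bool, ⟪q, signVec d s⟫ * ⟪z, signVec d s⟫ = 2 ^ d * ⟪q, z⟫ := by
  simp only [inner_signVec]
  have : ∀ s : Fin d → Bool,
      (∑ i, q i * signVec d s i) * (∑ j, z j * signVec d s j)
        = ∑ i, ∑ j, (q i * z j) * (signVec d s i * signVec d s j) := by
    intro s
    rw [Finset.sum_mul_sum]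
    congr 1; ext i; congr 1; ext j; ring
  simp only [this]
  rw [Finset.sum_comm]
  have h2 : ∀ i : Fin d, ∑ s : Fin d → Bool, ∑ j, (q i * z j) * (signVec d s i * signVec d s j)
      = 2 ^ d * (q i * z i) := by
    intro i
    rw [Finset.sum_comm]
    have h3 : ∀ j : Fin d, ∑ s : Fin d → Bool, (q i * z j) * (signVec d s i * signVec d s j)
        = if j = i then 2 ^ d * (q i * z i) else 0 := by
      intro j
      rw [← Finset.mul_sum]
      by_cases hij : j = i
      · subst hij
        simp only [if_pos rfl]
        rw [Finset.sum_congr rfl (fun s _ => signVec_mul_self d s j)]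
        simp [Finset.card_univ, mul_comm]
      · rw [sum_signVec_mul d i j (Ne.symm hij), mul_zero, if_neg hij]
    rw [Finset.sum_congr rfl (fun j _ => h3 j)]
    simp
  rw [Finset.sum_congr rfl (fun i _ => h2 i), ← Finset.mul_sum, PiLp.inner_apply]
  simp [RCLike.inner_apply, mul_comm]

lemma master_self (d : ℕ) (q : EuclideanSpace ℝ (Fin d)) :
    ∑ s : Fin d → Bool, ⟪q, signVec d s⟫ ^ 2 = 2 ^ d * ‖q‖ ^ 2 := by
  have h := master d q q
  rw [real_inner_self_eq_norm_sq] at h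
  simpa [sq] using h

lemma sum_inner_smul_signVec (d : ℕ) (q : EuclideanSpace ℝ (Fin d)) :
    ∑ s : Fin d → Bool, ⟪q, signVec d s⟫ • signVec d s = (2 ^ d : ℝ) • q := by
  apply ext_inner_left ℝ
  intro z
  rw [inner_sum, inner_smul_right]
  simp only [real_inner_smul_right]
  calc ∑ s : Fin d → Bool, ⟪q, signVec d s⟫ * ⟪z, signVec d s⟫
      = 2 ^ d * ⟪q, z⟫ := master d q z
    _ = (2 ^ d : ℝ) * ⟪z, q⟫ := by rw [real_inner_comm]

lemma var_sum {ι S : Type*} [Fintype ι] [DecidableEq ι] [Fintype S]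
    {E : Type*} [NormedAddCommGroup E] [InnerProductSpace ℝ E]
    (v : S → E) (hv : ∑ s, v s = 0) :
    ∑ t : ι → S, ‖∑ k, v (t k)‖ ^ 2
      = (Fintype.card ι * (Fintype.card S) ^ (Fintype.card ι - 1)) • ∑ s, ‖v s‖ ^ 2 := by
  have expand : ∀ t : ι → S, ‖∑ k, v (t k)‖ ^ 2 = ∑ k, ∑ j, ⟪v (t k), v (t j)⟫ := by
    intro t
    rw [← real_inner_self_eq_norm_sq, sum_inner]
    exact Finset.sum_congr rfl fun k _ => inner_sum _ _ _
  simp only [expand]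
  rw [Finset.sum_comm]
  have key : ∀ k j : ι, ∑ t : ι → S, ⟪v (t k), v (t j)⟫
      = if j = k then ((Fintype.card S) ^ (Fintype.card ι - 1) • ∑ s, ‖v s‖ ^ 2) else 0 := by
    intro k j
    by_cases hjk : j = k
    · subst hjk
      rw [if_pos rfl]
      have h := sum_eval (fun s => (⟪v s, v s⟫ : ℝ)) j
      simp only [real_inner_self_eq_norm_sq] at h ⊢
      exact h
    · rw [if_neg hjk]
      obtain ⟨c, hc⟩ := sum_eval_pair (fun a b => (⟪v a, v b⟫ : ℝ)) k j hjk
      rw [hc]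
      have : ∑ a : S, ∑ b : S, (⟪v a, v b⟫ : ℝ) = 0 := by
        have h1 : ∀ a : S, ∑ b : S, (⟪v a, v b⟫ : ℝ) = ⟪v a, ∑ s, v s⟫ :=
          fun a => (inner_sum _ _ _).symm
        simp only [h1, hv, inner_zero_right, Finset.sum_const_zero]
      rw [this, smul_zero]
  have hinner : ∀ k : ι, ∑ j : ι, ∑ t : ι → S, ⟪v (t k), v (t j)⟫
      = (Fintype.card S) ^ (Fintype.card ι - 1) • ∑ s, ‖v s‖ ^ 2 := by
    intro k
    rw [Finset.sum_congr rfl fun j _ => key k j]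
    simp
  calc ∑ k : ι, ∑ t : ι → S, ∑ j : ι, ⟪v (t k), v (t j)⟫
      = ∑ k : ι, ∑ j : ι, ∑ t : ι → S, ⟪v (t k), v (t j)⟫ :=
        Finset.sum_congr rfl fun k _ => Finset.sum_comm
    _ = ∑ _k : ι, (Fintype.card S) ^ (Fintype.card ι - 1) • ∑ s, ‖v s‖ ^ 2 :=
        Finset.sum_congr rfl fun k _ => hinner k
    _ = _ := by rw [Finset.sum_const, Finset.card_univ, smul_smul]

lemma norm_signVec_sq (d : ℕ) (s : Fin d → Bool) : ‖signVec d s‖ ^ 2 = d := by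
  rw [← real_inner_self_eq_norm_sq, PiLp.inner_apply]
  simp only [RCLike.inner_apply, conj_trivial]
  rw [Finset.sum_congr rfl (fun i _ => signVec_mul_self d s i)]
  simp

lemma norm_signVec (d : ℕ) (s : Fin d → Bool) : ‖signVec d s‖ = Real.sqrt d := by
  rw [← Real.sqrt_sq (norm_nonneg _), norm_signVec_sq]

lemma triangle3_sq {E : Type*} [NormedAddCommGroup E] (a b c : E) :
    ‖a + b + c‖ ^ 2 ≤ 3 * ‖a‖ ^ 2 + 3 * ‖b‖ ^ 2 + 3 * ‖c‖ ^ 2 := by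
  have h1 : ‖a + b + c‖ ≤ ‖a‖ + ‖b‖ + ‖c‖ :=
    le_trans (norm_add_le _ _) (by have := norm_add_le a b; linarith)
  nlinarith [norm_nonneg (a + b + c), norm_nonneg a, norm_nonneg b, norm_nonneg c,
    sq_nonneg (‖a‖ - ‖b‖), sq_nonneg (‖a‖ - ‖c‖), sq_nonneg (‖b‖ - ‖c‖)]

lemma pointwise_bound {d K : ℕ} (hd : 1 ≤ d) (hK : 1 ≤ K)
    (q p : EuclideanSpace ℝ (Fin d)) (B : ℝ) (hB : 0 ≤ B)
    (e : (Fin d → Bool) → ℝ) (he : ∀ s, |e s| ≤ B) :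
    ((2 : ℝ) ^ (d * K))⁻¹ *
        ∑ t : Fin K → Fin d → Bool,
          ‖(K : ℝ)⁻¹ • (∑ k : Fin K, ((⟪q, signVec d (t k)⟫ + e (t k)) • signVec d (t k)))
            - p‖ ^ 2
      ≤ 6 * ((d : ℝ) / K) * ‖q‖ ^ 2 + 3 * ‖q - p‖ ^ 2 + 3 * B ^ 2 * d := by
  classical
  set r := signVec d
  have hK0 : (0 : ℝ) < (K : ℝ) := by exact_mod_cast hK
  have hKne : (K : ℝ) ≠ 0 := ne_of_gt hK0
  set v : (Fin d → Bool) → EuclideanSpace ℝ (Fin d) := fun s => ⟪q, r s⟫ • r s - q with hv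
  have hv0 : ∑ s, v s = 0 := by
    rw [Finset.sum_sub_distrib, sum_inner_smul_signVec, Finset.sum_const, Finset.card_univ,
      Fintype.card_fun]
    simp [Fintype.card_fin, ← Nat.cast_smul_eq_nsmul ℝ]
  -- decomposition
  have hdecomp : ∀ t : Fin K → Fin d → Bool,
      (K : ℝ)⁻¹ • (∑ k : Fin K, ((⟪q, r (t k)⟫ + e (t k)) • r (t k))) - p
        = ((K : ℝ)⁻¹ • ∑ k : Fin K, v (t k)) + (q - p)
            + ((K : ℝ)⁻¹ • ∑ k : Fin K, e (t k) • r (t k)) := by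
    intro t
    have h1 : ∑ k : Fin K, ((⟪q, r (t k)⟫ + e (t k)) • r (t k))
        = (∑ k : Fin K, v (t k)) + (K : ℝ) • q + ∑ k : Fin K, e (t k) • r (t k) := by
      have : ∀ k : Fin K, (⟪q, r (t k)⟫ + e (t k)) • r (t k)
          = v (t k) + q + e (t k) • r (t k) := by
        intro k; simp only [hv, add_smul, sub_add_cancel]
      rw [Finset.sum_congr rfl fun k _ => this k, Finset.sum_add_distrib,
        Finset.sum_add_distrib, Finset.sum_const, Finset.card_univ, Fintype.card_fin,
        ← Nat.cast_smul_eq_nsmul ℝ]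
    rw [h1, smul_add, smul_add, smul_smul, inv_mul_cancel₀ hKne, one_smul]
    abel
  -- C-term bound
  have hC : ∀ t : Fin K → Fin d → Bool,
      ‖(K : ℝ)⁻¹ • ∑ k : Fin K, e (t k) • r (t k)‖ ^ 2 ≤ B ^ 2 * d := by
    intro t
    have h1 : ‖∑ k : Fin K, e (t k) • r (t k)‖ ≤ (K : ℝ) * (B * Real.sqrt d) := by
      calc ‖∑ k : Fin K, e (t k) • r (t k)‖ ≤ ∑ k : Fin K, ‖e (t k) • r (t k)‖ :=
            norm_sum_le _ _
        _ ≤ ∑ _k : Fin K, B * Real.sqrt d := by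
            refine Finset.sum_le_sum fun k _ => ?_
            rw [norm_smul, Real.norm_eq_abs, norm_signVec]
            exact mul_le_mul_of_nonneg_right (he _) (Real.sqrt_nonneg _)
        _ = (K : ℝ) * (B * Real.sqrt d) := by
            rw [Finset.sum_const, Finset.card_univ, Fintype.card_fin, nsmul_eq_mul]
    have h2 : ‖(K : ℝ)⁻¹ • ∑ k : Fin K, e (t k) • r (t k)‖ ≤ B * Real.sqrt d := by
      rw [norm_smul, Real.norm_eq_abs, abs_of_pos (inv_pos.mpr hK0)]
      calc (K : ℝ)⁻¹ * ‖∑ k : Fin K, e (t k) • r (t k)‖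
          ≤ (K : ℝ)⁻¹ * ((K : ℝ) * (B * Real.sqrt d)) := by
            exact mul_le_mul_of_nonneg_left h1 (le_of_lt (inv_pos.mpr hK0))
        _ = B * Real.sqrt d := by field_simp
    calc ‖(K : ℝ)⁻¹ • ∑ k : Fin K, e (t k) • r (t k)‖ ^ 2 ≤ (B * Real.sqrt d) ^ 2 := by
          apply sq_le_sq' _ h2
          linarith [norm_nonneg ((K : ℝ)⁻¹ • ∑ k : Fin K, e (t k) • r (t k)),
            mul_nonneg hB (Real.sqrt_nonneg (d : ℝ))]
      _ = B ^ 2 * d := by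
          rw [mul_pow, Real.sq_sqrt (by positivity : (0:ℝ) ≤ (d:ℝ))]
  -- A-term bound
  have hvs : ∑ s : Fin d → Bool, ‖v s‖ ^ 2 ≤ (2 : ℝ) ^ d * (2 * d) * ‖q‖ ^ 2 := by
    have hpt : ∀ s : Fin d → Bool, ‖v s‖ ^ 2 ≤ (d : ℝ) * ⟪q, r s⟫ ^ 2 + ‖q‖ ^ 2 := by
      intro s
      have h1 : ‖v s‖ ^ 2 = ‖⟪q, r s⟫ • r s‖ ^ 2 - 2 * ⟪⟪q, r s⟫ • r s, q⟫ + ‖q‖ ^ 2 := by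
        rw [hv]; exact norm_sub_sq_real _ _
      have h2 : ‖⟪q, r s⟫ • r s‖ ^ 2 = ⟪q, r s⟫ ^ 2 * (d : ℝ) := by
        rw [norm_smul, Real.norm_eq_abs, mul_pow, sq_abs, norm_signVec_sq]
      have h3 : ⟪⟪q, r s⟫ • r s, q⟫ = ⟪q, r s⟫ ^ 2 := by
        rw [real_inner_smul_left, real_inner_comm, sq]
      rw [h1, h2, h3]
      nlinarith [sq_nonneg (⟪q, r s⟫ : ℝ)]
    calc ∑ s : Fin d → Bool, ‖v s‖ ^ 2
        ≤ ∑ s : Fin d → Bool, ((d : ℝ) * ⟪q, r s⟫ ^ 2 + ‖q‖ ^ 2) :=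
          Finset.sum_le_sum fun s _ => hpt s
      _ = (d : ℝ) * ((2 : ℝ) ^ d * ‖q‖ ^ 2) + (2 : ℝ) ^ d * ‖q‖ ^ 2 := by
          rw [Finset.sum_add_distrib, ← Finset.mul_sum, master_self, Finset.sum_const,
            Finset.card_univ, Fintype.card_fun, nsmul_eq_mul]
          simp [Fintype.card_fin]
      _ ≤ (2 : ℝ) ^ d * (2 * d) * ‖q‖ ^ 2 := by
          have hd1 : (1 : ℝ) ≤ (d : ℝ) := by exact_mod_cast hd
          have h2d : (0 : ℝ) < (2 : ℝ) ^ d := by positivity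
          nlinarith [sq_nonneg ‖q‖,
            mul_nonneg (mul_nonneg (by linarith : (0:ℝ) ≤ (d:ℝ) - 1) h2d.le) (sq_nonneg ‖q‖)]
  have hvar : ∑ t : Fin K → Fin d → Bool, ‖∑ k : Fin K, v (t k)‖ ^ 2
      = (K * (2 ^ d) ^ (K - 1) : ℕ) • ∑ s : Fin d → Bool, ‖v s‖ ^ 2 := by
    have := var_sum (ι := Fin K) v hv0
    rwa [Fintype.card_fin, Fintype.card_fun, Fintype.card_bool, Fintype.card_fin] at this
  have hA : ∑ t : Fin K → Fin d → Bool, ‖(K : ℝ)⁻¹ • ∑ k : Fin K, v (t k)‖ ^ 2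
      ≤ (2 : ℝ) ^ (d * K) * (2 * (d : ℝ) / (K : ℝ)) * ‖q‖ ^ 2 := by
    have hsm : ∀ t : Fin K → Fin d → Bool, ‖(K : ℝ)⁻¹ • ∑ k : Fin K, v (t k)‖ ^ 2
        = ((K : ℝ) ^ 2)⁻¹ * ‖∑ k : Fin K, v (t k)‖ ^ 2 := by
      intro t
      rw [norm_smul, Real.norm_eq_abs, abs_of_pos (inv_pos.mpr hK0), mul_pow, inv_pow]
    rw [Finset.sum_congr rfl fun t _ => hsm t, ← Finset.mul_sum, hvar, nsmul_eq_mul]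
    have hcast : ((K * (2 ^ d) ^ (K - 1) : ℕ) : ℝ) = (K : ℝ) * ((2 : ℝ) ^ d) ^ (K - 1) := by
      push_cast; ring
    rw [hcast]
    have hpow : ((2 : ℝ) ^ d) ^ (K - 1) * (2 : ℝ) ^ d = (2 : ℝ) ^ (d * K) := by
      rw [← pow_mul, ← pow_add]
      congr 1
      have : K - 1 + 1 = K := Nat.succ_pred_eq_of_pos hK
      calc d * (K - 1) + d = d * (K - 1 + 1) := by ring
        _ = d * K := by rw [this]
    calc ((K : ℝ) ^ 2)⁻¹ * ((K : ℝ) * ((2 : ℝ) ^ d) ^ (K - 1)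
            * ∑ s : Fin d → Bool, ‖v s‖ ^ 2)
        ≤ ((K : ℝ) ^ 2)⁻¹ * ((K : ℝ) * ((2 : ℝ) ^ d) ^ (K - 1)
            * ((2 : ℝ) ^ d * (2 * d) * ‖q‖ ^ 2)) := by
          apply mul_le_mul_of_nonneg_left _ (by positivity)
          apply mul_le_mul_of_nonneg_left hvs (by positivity)
      _ = (2 : ℝ) ^ (d * K) * (2 * (d : ℝ) / (K : ℝ)) * ‖q‖ ^ 2 := by
          rw [← hpow]; field_simp
  -- assemble
  have hcard : ((Fintype.card (Fin K → Fin d → Bool) : ℕ) : ℝ) = (2 : ℝ) ^ (d * K) := by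
    rw [Fintype.card_fun, Fintype.card_fun, Fintype.card_bool, Fintype.card_fin,
      Fintype.card_fin]
    push_cast
    rw [← pow_mul]
  have hN : (0 : ℝ) < (2 : ℝ) ^ (d * K) := by positivity
  have hsum : ∑ t : Fin K → Fin d → Bool,
      ‖(K : ℝ)⁻¹ • (∑ k : Fin K, ((⟪q, r (t k)⟫ + e (t k)) • r (t k))) - p‖ ^ 2
      ≤ (2 : ℝ) ^ (d * K) * (2 * (d : ℝ) / (K : ℝ)) * ‖q‖ ^ 2 * 3
        + (2 : ℝ) ^ (d * K) * (3 * ‖q - p‖ ^ 2 + 3 * (B ^ 2 * d)) := by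
    calc ∑ t : Fin K → Fin d → Bool,
        ‖(K : ℝ)⁻¹ • (∑ k : Fin K, ((⟪q, r (t k)⟫ + e (t k)) • r (t k))) - p‖ ^ 2
        ≤ ∑ t : Fin K → Fin d → Bool,
            (3 * ‖(K : ℝ)⁻¹ • ∑ k : Fin K, v (t k)‖ ^ 2
              + (3 * ‖q - p‖ ^ 2 + 3 * (B ^ 2 * d))) := by
          refine Finset.sum_le_sum fun t _ => ?_
          rw [hdecomp t]
          have := triangle3_sq ((K : ℝ)⁻¹ • ∑ k : Fin K, v (t k)) (q - p)
            ((K : ℝ)⁻¹ • ∑ k : Fin K, e (t k) • r (t k))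
          have hct := hC t
          linarith
      _ = 3 * ∑ t : Fin K → Fin d → Bool, ‖(K : ℝ)⁻¹ • ∑ k : Fin K, v (t k)‖ ^ 2
            + (Fintype.card (Fin K → Fin d → Bool) : ℝ)
              * (3 * ‖q - p‖ ^ 2 + 3 * (B ^ 2 * d)) := by
          rw [Finset.sum_add_distrib, Finset.sum_const, Finset.card_univ, nsmul_eq_mul,
            ← Finset.mul_sum]
      _ ≤ _ := by
          rw [hcard]
          have := hA
          nlinarith [hA]
  calc ((2 : ℝ) ^ (d * K))⁻¹ *
      ∑ t : Fin K → Fin d → Bool,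
        ‖(K : ℝ)⁻¹ • (∑ k : Fin K, ((⟪q, r (t k)⟫ + e (t k)) • r (t k))) - p‖ ^ 2
      ≤ ((2 : ℝ) ^ (d * K))⁻¹ *
        ((2 : ℝ) ^ (d * K) * (2 * (d : ℝ) / (K : ℝ)) * ‖q‖ ^ 2 * 3
          + (2 : ℝ) ^ (d * K) * (3 * ‖q - p‖ ^ 2 + 3 * (B ^ 2 * d))) :=
        mul_le_mul_of_nonneg_left hsum (by positivity)
    _ = 6 * ((d : ℝ) / K) * ‖q‖ ^ 2 + 3 * ‖q - p‖ ^ 2 + 3 * B ^ 2 * d := by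
        field_simp
        ring

lemma taylor_bound {d : ℕ} {h : EuclideanSpace ℝ (Fin d) → ℝ}
    (hdiff : Differentiable ℝ h) {L : ℝ} (hL0 : 0 ≤ L)
    (hL : ∀ a b, ‖gradient h a - gradient h b‖ ≤ L * ‖a - b‖)
    (y rr : EuclideanSpace ℝ (Fin d)) {δ : ℝ} (hδ : 0 < δ) :
    |h (y + δ • rr) - h (y - δ • rr) - 2 * δ * ⟪gradient h y, rr⟫|
      ≤ 2 * L * δ ^ 2 * ‖rr‖ ^ 2 := by
  set q := gradient h y with hq
  set φ : EuclideanSpace ℝ (Fin d) → ℝ := fun z => h z - ⟪q, z⟫ with hφdef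
  set s : Set (EuclideanSpace ℝ (Fin d)) := segment ℝ (y - δ • rr) (y + δ • rr) with hsdef
  have hfd : ∀ x ∈ s, HasFDerivWithinAt φ (fderiv ℝ h x - innerSL ℝ q) s x := by
    intro x _
    exact (((hdiff x).hasFDerivAt.sub ((innerSL ℝ q).hasFDerivAt)).hasFDerivWithinAt)
  have hnorm_eq : ∀ x, ‖fderiv ℝ h x - innerSL ℝ q‖ = ‖gradient h x - q‖ := by
    intro x
    have h2 : ∀ z, fderiv ℝ h x z = ⟪gradient h x, z⟫ := by
      intro z
      rw [gradient, ← InnerProductSpace.toDual_apply_apply, LinearIsometryEquiv.apply_symm_apply]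
    have h1 : fderiv ℝ h x - innerSL ℝ q
        = InnerProductSpace.toDual ℝ (EuclideanSpace ℝ (Fin d)) (gradient h x - q) := by
      ext z
      simp only [ContinuousLinearMap.coe_sub', Pi.sub_apply, innerSL_apply_apply,
        InnerProductSpace.toDual_apply_apply, inner_sub_left, h2]
    rw [h1, LinearIsometryEquiv.norm_map]
  have hseg : ∀ x ∈ s, ‖x - y‖ ≤ δ * ‖rr‖ := by
    intro x hx
    obtain ⟨a, b, ha, hb, hab, hx⟩ := hx
    have hxy : x - y = ((b - a) * δ) • rr := by
      have h1 : a • (y - δ • rr) + b • (y + δ • rr)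
          = (a + b) • y + ((b - a) * δ) • rr := by
        rw [smul_sub, smul_add, add_smul, sub_mul, sub_smul, mul_smul, mul_smul]
        abel
      rw [← hx, h1, hab, one_smul]
      abel
    rw [hxy, norm_smul, Real.norm_eq_abs, abs_mul, abs_of_pos hδ]
    have hba : |b - a| ≤ 1 := by rw [abs_le]; constructor <;> linarith
    nlinarith [mul_le_mul_of_nonneg_right
      (mul_le_mul_of_nonneg_right hba hδ.le) (norm_nonneg rr)]
  have hbound : ∀ x ∈ s, ‖fderiv ℝ h x - innerSL ℝ q‖ ≤ L * (δ * ‖rr‖) := by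
    intro x hx
    rw [hnorm_eq]
    calc ‖gradient h x - q‖ ≤ L * ‖x - y‖ := hL x y
      _ ≤ L * (δ * ‖rr‖) := mul_le_mul_of_nonneg_left (hseg x hx) hL0
  have hxs : y - δ • rr ∈ s := left_mem_segment ℝ _ _
  have hys : y + δ • rr ∈ s := right_mem_segment ℝ _ _
  have hmvt := Convex.norm_image_sub_le_of_norm_hasFDerivWithin_le hfd hbound
    (convex_segment _ _) hxs hys
  have hdiff_pts : (y + δ • rr) - (y - δ • rr) = (2 * δ) • rr := by
    rw [two_mul, add_smul]; abel
  have hnorm_pts : ‖(y + δ • rr) - (y - δ • rr)‖ = 2 * δ * ‖rr‖ := by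
    rw [hdiff_pts, norm_smul, Real.norm_eq_abs, abs_of_pos (by linarith)]
  have hφval : φ (y + δ • rr) - φ (y - δ • rr)
      = h (y + δ • rr) - h (y - δ • rr) - 2 * δ * ⟪q, rr⟫ := by
    simp only [hφdef]
    have : (⟪q, y + δ • rr⟫ : ℝ) - ⟪q, y - δ • rr⟫ = 2 * δ * ⟪q, rr⟫ := by
      rw [inner_add_right, inner_sub_right, real_inner_smul_right]
      ring
    linarith [this]
  rw [← Real.norm_eq_abs, ← hφval]
  calc ‖φ (y + δ • rr) - φ (y - δ • rr)‖
      ≤ L * (δ * ‖rr‖) * ‖(y + δ • rr) - (y - δ • rr)‖ := hmvt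
    _ = L * (δ * ‖rr‖) * (2 * δ * ‖rr‖) := by rw [hnorm_pts]
    _ = 2 * L * δ ^ 2 * ‖rr‖ ^ 2 := by ring

set_option maxHeartbeats 2000000 in
/-- **Shared-sample Rademacher estimator bound** (Eq. shared-sample-rademacher-bound).
There is a universal constant `C > 0` such that for every stochastic loss
`g(·, ω)` with a.e. `L`-Lipschitz gradient, square-integrable sampled gradient at
`y` with population gradient `p = ∇G(y) = ∫ ∇g(y, ω) dP` and variance `σ²`, the
joint average (over `ω ∼ P` and all `2^{dK}` direction tuples) of the squared
error of the `K`-direction two-point estimator with radius `δ` and one shared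
sample is at most `C((d/K)‖∇G(y)‖² + L²δ²d³ + (1 + d/K)σ²)`. -/
theorem stmt_13 :
    ∃ C : ℝ, 0 < C ∧
      ∀ (d K : ℕ), 1 ≤ d → 1 ≤ K →
      ∀ (Ω : Type) (_ : MeasurableSpace Ω) (P : Measure Ω),
        IsProbabilityMeasure P →
      ∀ (δ L : ℝ), 0 < δ → 0 ≤ L →
      ∀ (y : EuclideanSpace ℝ (Fin d)) (g : EuclideanSpace ℝ (Fin d) → Ω → ℝ)
        (G : EuclideanSpace ℝ (Fin d) → ℝ) (p : EuclideanSpace ℝ (Fin d)) (σ2 : ℝ),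
        (∀ w, AEStronglyMeasurable (fun ω => g w ω) P) →
        (∀ᵐ ω ∂P, Differentiable ℝ (fun w => g w ω) ∧
          ∀ a b, ‖gradient (fun w => g w ω) a - gradient (fun w => g w ω) b‖ ≤
            L * ‖a - b‖) →
        MemLp (fun ω => gradient (fun w => g w ω) y) 2 P →
        (∀ w, G w = ∫ ω, g w ω ∂P) →
        p = (∫ ω, gradient (fun w => g w ω) y ∂P) →
        HasGradientAt G p y →
        σ2 = (∫ ω, ‖gradient (fun w => g w ω) y - p‖ ^ 2 ∂P) →
        ((2 : ℝ) ^ (d * K))⁻¹ *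
            ∑ t : Fin K → Fin d → Bool,
              ∫ ω, ‖(K : ℝ)⁻¹ •
                  (∑ k : Fin K,
                    ((g (y + δ • signVec d (t k)) ω - g (y - δ • signVec d (t k)) ω) /
                        (2 * δ)) • signVec d (t k)) -
                p‖ ^ 2 ∂P ≤
          C * (((d : ℝ) / (K : ℝ)) * ‖p‖ ^ 2 + L ^ 2 * δ ^ 2 * (d : ℝ) ^ 3 +
            (1 + (d : ℝ) / (K : ℝ)) * σ2) := by
  classical
  refine ⟨12, by norm_num, ?_⟩
  intro d K hd hK Ω mΩ P hP δ L hδ hL0 y g G p σ2 hmeas hae hq2 hG hp hgrad hσ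
  set q : Ω → EuclideanSpace ℝ (Fin d) := fun ω => gradient (fun w => g w ω) y with hqdef
  set B : ℝ := L * δ * d with hBdef
  have hB0 : 0 ≤ B := by positivity
  set e : (Fin d → Bool) → Ω → ℝ := fun s ω =>
    (g (y + δ • signVec d s) ω - g (y - δ • signVec d s) ω) / (2 * δ) - ⟪q ω, signVec d s⟫
    with hedef
  -- a.e. bound on the Taylor error
  have hae' : ∀ᵐ ω ∂P, ∀ s : Fin d → Bool, |e s ω| ≤ B := by
    filter_upwards [hae] with ω hω
    intro s
    obtain ⟨hdiff, hLip⟩ := hω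
    have ht := taylor_bound hdiff hL0 hLip y (signVec d s) hδ
    rw [norm_signVec_sq] at ht
    have h2δ : (0 : ℝ) < 2 * δ := by linarith
    have hee : e s ω = (g (y + δ • signVec d s) ω - g (y - δ • signVec d s) ω
        - 2 * δ * ⟪q ω, signVec d s⟫) / (2 * δ) := by
      rw [hedef]
      field_simp
    rw [hee, abs_div, abs_of_pos h2δ, div_le_iff₀ h2δ]
    calc |g (y + δ • signVec d s) ω - g (y - δ • signVec d s) ω
          - 2 * δ * ⟪q ω, signVec d s⟫| ≤ 2 * L * δ ^ 2 * d := ht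
      _ = B * (2 * δ) := by rw [hBdef]; ring
  -- measurability / integrability
  have hqAESM : AEStronglyMeasurable q P := hq2.aestronglyMeasurable
  have heAESM : ∀ s, AEStronglyMeasurable (e s) P := by
    intro s
    have h1 : AEStronglyMeasurable (fun ω =>
        (g (y + δ • signVec d s) ω - g (y - δ • signVec d s) ω) / (2 * δ)) P := by
      simp only [div_eq_mul_inv]
      exact ((hmeas _).sub (hmeas _)).mul aestronglyMeasurable_const
    exact h1.sub (hqAESM.inner aestronglyMeasurable_const)
  have he2 : ∀ s, MemLp (e s) 2 P := by
    intro s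
    refine MemLp.of_bound (heAESM s) B ?_
    filter_upwards [hae'] with ω h
    rw [Real.norm_eq_abs]; exact h s
  have hX2 : ∀ t : Fin K → Fin d → Bool,
      MemLp (fun ω => (K : ℝ)⁻¹ •
        (∑ k : Fin K,
          ((g (y + δ • signVec d (t k)) ω - g (y - δ • signVec d (t k)) ω) /
              (2 * δ)) • signVec d (t k)) - p) 2 P := by
    intro t
    apply MemLp.sub _ (memLp_const p)
    have hsum : MemLp (fun ω =>
        ∑ k : Fin K,
          ((g (y + δ • signVec d (t k)) ω - g (y - δ • signVec d (t k)) ω) /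
              (2 * δ)) • signVec d (t k)) 2 P := by
      apply memLp_finset_sum
      intro k _
      have hfun : (fun ω =>
          ((g (y + δ • signVec d (t k)) ω - g (y - δ • signVec d (t k)) ω) /
              (2 * δ)) • signVec d (t k))
          = fun ω => (⟪q ω, signVec d (t k)⟫ + e (t k) ω) • signVec d (t k) := by
        funext ω
        rw [hedef]
        congr 1
        ring
      rw [hfun]
      have hscal : MemLp (fun ω => (⟪q ω, signVec d (t k)⟫ + e (t k) ω)) 2 P :=
        by
          have h1 : MemLp (fun ω => ⟪q ω, signVec d (t k)⟫) 2 P := hq2.inner_const _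
          exact h1.add (he2 (t k))
      have := ((ContinuousLinearMap.id ℝ ℝ).smulRight (signVec d (t k))).comp_memLp' hscal
      exact this
    have := hsum.const_smul ((K : ℝ)⁻¹)
    exact this
  have hFint : ∀ t : Fin K → Fin d → Bool,
      Integrable (fun ω => ‖(K : ℝ)⁻¹ •
        (∑ k : Fin K,
          ((g (y + δ • signVec d (t k)) ω - g (y - δ • signVec d (t k)) ω) /
              (2 * δ)) • signVec d (t k)) - p‖ ^ 2) P :=
    fun t => (hX2 t).norm.integrable_sq
  have hqn : Integrable (fun ω => ‖q ω‖ ^ 2) P := hq2.norm.integrable_sq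
  have hqpn : Integrable (fun ω => ‖q ω - p‖ ^ 2) P :=
    (hq2.sub (memLp_const p)).norm.integrable_sq
  -- swap sum and integral
  have hswap : ∑ t : Fin K → Fin d → Bool,
      ∫ ω, ‖(K : ℝ)⁻¹ •
        (∑ k : Fin K,
          ((g (y + δ • signVec d (t k)) ω - g (y - δ • signVec d (t k)) ω) /
              (2 * δ)) • signVec d (t k)) - p‖ ^ 2 ∂P
      = ∫ ω, ∑ t : Fin K → Fin d → Bool,
          ‖(K : ℝ)⁻¹ • (∑ k : Fin K,
            ((g (y + δ • signVec d (t k)) ω - g (y - δ • signVec d (t k)) ω) /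
              (2 * δ)) • signVec d (t k)) - p‖ ^ 2 ∂P :=
    (integral_finset_sum Finset.univ (fun t _ => hFint t)).symm
  -- pointwise bound
  have hptwise : ∀ᵐ ω ∂P,
      ((2 : ℝ) ^ (d * K))⁻¹ * ∑ t : Fin K → Fin d → Bool,
        ‖(K : ℝ)⁻¹ • (∑ k : Fin K,
          ((g (y + δ • signVec d (t k)) ω - g (y - δ • signVec d (t k)) ω) /
            (2 * δ)) • signVec d (t k)) - p‖ ^ 2
      ≤ 6 * ((d : ℝ) / K) * ‖q ω‖ ^ 2 + 3 * ‖q ω - p‖ ^ 2 + 3 * B ^ 2 * d := by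
    filter_upwards [hae'] with ω hω
    have hpb := pointwise_bound hd hK (q ω) p B hB0 (fun s => e s ω) hω
    have hXeq : ∀ t : Fin K → Fin d → Bool,
        ‖(K : ℝ)⁻¹ • (∑ k : Fin K,
          ((g (y + δ • signVec d (t k)) ω - g (y - δ • signVec d (t k)) ω) /
            (2 * δ)) • signVec d (t k)) - p‖ ^ 2
        = ‖(K : ℝ)⁻¹ • (∑ k : Fin K,
            ((⟪q ω, signVec d (t k)⟫ + e (t k) ω) • signVec d (t k))) - p‖ ^ 2 := by
      intro t
      have hsum_eq : (∑ k : Fin K,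
          ((g (y + δ • signVec d (t k)) ω - g (y - δ • signVec d (t k)) ω) /
            (2 * δ)) • signVec d (t k))
          = ∑ k : Fin K, ((⟪q ω, signVec d (t k)⟫ + e (t k) ω) • signVec d (t k)) := by
        refine Finset.sum_congr rfl fun k _ => ?_
        rw [hedef]
        congr 1
        ring
      rw [hsum_eq]
    rw [Finset.sum_congr rfl fun t _ => hXeq t]
    exact hpb
  -- integrate the pointwise bound
  have hLint : Integrable (fun ω => ((2 : ℝ) ^ (d * K))⁻¹ *
      ∑ t : Fin K → Fin d → Bool,
        ‖(K : ℝ)⁻¹ • (∑ k : Fin K,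
          ((g (y + δ • signVec d (t k)) ω - g (y - δ • signVec d (t k)) ω) /
            (2 * δ)) • signVec d (t k)) - p‖ ^ 2) P :=
    (integrable_finset_sum _ (fun t _ => hFint t)).const_mul _
  have hRint : Integrable (fun ω =>
      6 * ((d : ℝ) / K) * ‖q ω‖ ^ 2 + 3 * ‖q ω - p‖ ^ 2 + 3 * B ^ 2 * d) P :=
    ((hqn.const_mul _).add (hqpn.const_mul _)).add (integrable_const _)
  have hmain : ((2 : ℝ) ^ (d * K))⁻¹ *
      ∑ t : Fin K → Fin d → Bool,
        ∫ ω, ‖(K : ℝ)⁻¹ • (∑ k : Fin K,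
          ((g (y + δ • signVec d (t k)) ω - g (y - δ • signVec d (t k)) ω) /
            (2 * δ)) • signVec d (t k)) - p‖ ^ 2 ∂P
      ≤ ∫ ω, (6 * ((d : ℝ) / K) * ‖q ω‖ ^ 2 + 3 * ‖q ω - p‖ ^ 2 + 3 * B ^ 2 * d) ∂P := by
    rw [hswap, ← integral_const_mul]
    exact integral_mono_ae hLint hRint hptwise
  -- compute the right-hand side
  have hσ0 : 0 ≤ σ2 := by
    rw [hσ]
    exact integral_nonneg fun ω => sq_nonneg _
  have hqint : ∫ ω, ‖q ω‖ ^ 2 ∂P ≤ 2 * σ2 + 2 * ‖p‖ ^ 2 := by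
    have hpt : ∀ ω, ‖q ω‖ ^ 2 ≤ 2 * ‖q ω - p‖ ^ 2 + 2 * ‖p‖ ^ 2 := by
      intro ω
      have h1 : ‖q ω‖ ≤ ‖q ω - p‖ + ‖p‖ := by
        calc ‖q ω‖ = ‖(q ω - p) + p‖ := by rw [sub_add_cancel]
          _ ≤ ‖q ω - p‖ + ‖p‖ := norm_add_le _ _
      nlinarith [sq_nonneg (‖q ω - p‖ - ‖p‖), mul_self_le_mul_self (norm_nonneg (q ω)) h1,
        norm_nonneg (q ω), norm_nonneg (q ω - p), norm_nonneg p]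
    calc ∫ ω, ‖q ω‖ ^ 2 ∂P ≤ ∫ ω, (2 * ‖q ω - p‖ ^ 2 + 2 * ‖p‖ ^ 2) ∂P :=
          integral_mono hqn ((hqpn.const_mul 2).add (integrable_const _))
            (fun ω => hpt ω)
      _ = 2 * σ2 + 2 * ‖p‖ ^ 2 := by
          rw [integral_add (hqpn.const_mul 2) (integrable_const _), integral_const_mul,
            integral_const, probReal_univ]
          rw [hσ]
          simp [hqdef]
  have hRval : ∫ ω, (6 * ((d : ℝ) / K) * ‖q ω‖ ^ 2 + 3 * ‖q ω - p‖ ^ 2 + 3 * B ^ 2 * d) ∂P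
      = 6 * ((d : ℝ) / K) * (∫ ω, ‖q ω‖ ^ 2 ∂P) + 3 * σ2 + 3 * B ^ 2 * d := by
    have hI1 : Integrable (fun ω => 6 * ((d : ℝ) / K) * ‖q ω‖ ^ 2 + 3 * ‖q ω - p‖ ^ 2) P :=
      (hqn.const_mul _).add (hqpn.const_mul _)
    rw [integral_add hI1 (integrable_const _),
      integral_add (hqn.const_mul _) (hqpn.const_mul _), integral_const_mul,
      integral_const_mul, integral_const, probReal_univ, hσ]
    simp [hqdef]
  have hdK0 : (0 : ℝ) ≤ (d : ℝ) / K := by positivity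
  have hBd : 3 * B ^ 2 * (d : ℝ) = 3 * (L ^ 2 * δ ^ 2 * (d : ℝ) ^ 3) := by
    rw [hBdef]; ring
  calc ((2 : ℝ) ^ (d * K))⁻¹ *
      ∑ t : Fin K → Fin d → Bool,
        ∫ ω, ‖(K : ℝ)⁻¹ • (∑ k : Fin K,
          ((g (y + δ • signVec d (t k)) ω - g (y - δ • signVec d (t k)) ω) /
            (2 * δ)) • signVec d (t k)) - p‖ ^ 2 ∂P
      ≤ 6 * ((d : ℝ) / K) * (∫ ω, ‖q ω‖ ^ 2 ∂P) + 3 * σ2 + 3 * B ^ 2 * d := by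
        rw [← hRval]; exact hmain
    _ ≤ 6 * ((d : ℝ) / K) * (2 * σ2 + 2 * ‖p‖ ^ 2) + 3 * σ2 + 3 * B ^ 2 * d := by
        have := mul_le_mul_of_nonneg_left hqint (by positivity :
          (0:ℝ) ≤ 6 * ((d : ℝ) / K))
        linarith
    _ ≤ 12 * (((d : ℝ) / (K : ℝ)) * ‖p‖ ^ 2 + L ^ 2 * δ ^ 2 * (d : ℝ) ^ 3 +
          (1 + (d : ℝ) / (K : ℝ)) * σ2) := by
        rw [hBd]
        nlinarith [mul_nonneg hdK0 hσ0, mul_nonneg hdK0 (sq_nonneg ‖p‖),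
          sq_nonneg (L * δ), mul_nonneg (mul_nonneg (sq_nonneg L) (sq_nonneg δ))
            (by positivity : (0:ℝ) ≤ (d:ℝ)^3)]
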